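/- The ring game G admits fairness: every improvement path in G is infinite and every player is selected in it infinitely often. -/

import Mathlib

/-!
Game-theoretic formalization of Dijkstra's self-stabilization (Apt & Shoja).
Players are `Fin n`; a joint strategy is `s : Fin n → C`.
-/

/-- Payoff in the ring game `G` on the directed ring `0 → 1 → ⋯ → n-1 → 0`:
player `0` plays the anti-coordination game with respect to its predecessor
(player `n-1`, i.e. `0 - 1` in `Fin n`); every other player `i` plays the
coordination game with respect to its predecessor `i - 1`. -/
def ringPayoff {n : ℕ} [NeZero n] {C : Type*} [DecidableEq C]
    (s : Fin n → C) (i : Fin n) : ℕ :=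
  if i = 0 then (if s i = s (i - 1) then 0 else 1)
  else (if s i = s (i - 1) then 1 else 0)

/-- `s i` is a best response of player `i` to the strategies of the others in `s`. -/
def BestResponse {n : ℕ} {C : Type*}
    (p : (Fin n → C) → Fin n → ℕ) (s : Fin n → C) (i : Fin n) : Prop :=
  ∀ c : C, p (Function.update s i c) i ≤ p s i

/-- An improvement step from `s` to `s'` in which player `i` is selected:
only player `i` changes its strategy and its payoff strictly increases. -/
def StepAt {n : ℕ} {C : Type*}
    (p : (Fin n → C) → Fin n → ℕ) (i : Fin n) (s s' : Fin n → C) : Prop :=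
  (∀ j, j ≠ i → s' j = s j) ∧ p s i < p s' i

/-- A joint strategy is legitimate if exactly one player does not play a best response. -/
def Legitimate {n : ℕ} {C : Type*}
    (p : (Fin n → C) → Fin n → ℕ) (s : Fin n → C) : Prop :=
  ∃! i : Fin n, ¬ BestResponse p s i

section Aux

variable {n : ℕ} [NeZero n] {C : Type*} [DecidableEq C]

lemma ringPayoff_le_one (s : Fin n → C) (i : Fin n) : ringPayoff s i ≤ 1 := by
  unfold ringPayoff; split <;> split <;> simp

lemma ringPayoff_congr {s t : Fin n → C} {i : Fin n}
    (h1 : s i = t i) (h2 : s (i - 1) = t (i - 1)) :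
    ringPayoff s i = ringPayoff t i := by
  unfold ringPayoff; rw [h1, h2]

lemma one_ne_zero_fin (hn : 2 ≤ n) : (1 : Fin n) ≠ 0 := by
  intro h
  have := congrArg Fin.val h
  simp [Fin.val_one'] at this
  omega

lemma not_sel_fix (σ : ℕ → Fin n → C) (sel : ℕ → Fin n)
    (hstep : ∀ k : ℕ, StepAt (ringPayoff (n := n) (C := C)) (sel k) (σ k) (σ (k + 1)))
    (j : Fin n) (K : ℕ) :
    ∀ m, K ≤ m → (∀ l, K ≤ l → l < m → sel l ≠ j) → σ m j = σ K j := by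
  intro m
  induction m with
  | zero =>
    intro h _
    obtain rfl := Nat.le_zero.mp h
    rfl
  | succ m ih =>
    intro hm hns
    rcases Nat.lt_or_ge K (m + 1) with h | h
    · have hKm : K ≤ m := by omega
      have h1 : σ (m + 1) j = σ m j :=
        (hstep m).1 j (fun he => hns m hKm (by omega) (he ▸ rfl))
      rw [h1, ih hKm (fun l hl hlm => hns l hl (by omega))]
    · have : K = m + 1 := by omega
      rw [this]

lemma step_changes (σ : ℕ → Fin n → C) (sel : ℕ → Fin n)
    (hstep : ∀ k : ℕ, StepAt (ringPayoff (n := n) (C := C)) (sel k) (σ k) (σ (k + 1)))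
    (K : ℕ) : σ (K + 1) (sel K) ≠ σ K (sel K) := by
  intro h
  have heq : σ (K + 1) = σ K := by
    funext j
    by_cases hj : j = sel K
    · rw [hj]; exact h
    · exact (hstep K).1 j hj
  have := (hstep K).2
  rw [heq] at this
  exact lt_irrefl _ this

lemma fix_succ (σ : ℕ → Fin n → C) (sel : ℕ → Fin n)
    (hstep : ∀ k : ℕ, StepAt (ringPayoff (n := n) (C := C)) (sel k) (σ k) (σ (k + 1)))
    (j : Fin n) (K : ℕ)
    (hpred : ∀ m, K ≤ m → σ m (j - 1) = σ K (j - 1)) :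
    ∃ K', K ≤ K' ∧ ∀ m, K' ≤ m → σ m j = σ K' j := by
  by_cases h : ∃ m, K ≤ m ∧ sel m = j
  · obtain ⟨m0, hm0, hsel⟩ := h
    have hlt := (hstep m0).2
    rw [hsel] at hlt
    have hle := ringPayoff_le_one (σ (m0 + 1)) j
    have hp1 : ringPayoff (σ (m0 + 1)) j = 1 := by omega
    refine ⟨m0 + 1, by omega, ?_⟩
    intro m hm
    induction m, hm using Nat.le_induction with
    | base => rfl
    | succ m hm ih =>
      by_cases hs : sel m = j
      · exfalso
        have hpm : ringPayoff (σ m) j = ringPayoff (σ (m0 + 1)) j :=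
          ringPayoff_congr ih (by rw [hpred m (by omega), hpred (m0 + 1) (by omega)])
        have h2 := (hstep m).2
        rw [hs] at h2
        have h3 := ringPayoff_le_one (σ (m + 1)) j
        omega
      · rw [(hstep m).1 j (fun he => hs (he ▸ rfl)), ih]
  · push_neg at h
    exact ⟨K, le_refl K, fun m hm => not_sel_fix σ sel hstep j K m hm
      (fun l hl _ => h l hl)⟩

end Aux

open Fin.NatCast Fin.CommRing

/-- The ring game `G` admits fairness: every improvement path in `G`
is infinite (from every joint strategy some improvement step is possible, so no
maximal sequence of improvement steps is finite) and in every (infinite)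
improvement path every player is selected infinitely often. -/
theorem ring_game_admits_fairness
    (n : ℕ) [NeZero n] (hn : 2 ≤ n)
    (C : Type*) [Fintype C] [DecidableEq C] (hC : 2 ≤ Fintype.card C) :
    (∀ s : Fin n → C, ∃ (i : Fin n) (s' : Fin n → C),
        StepAt (ringPayoff (n := n) (C := C)) i s s') ∧
    (∀ (σ : ℕ → Fin n → C) (sel : ℕ → Fin n),
        (∀ k : ℕ, StepAt (ringPayoff (n := n) (C := C)) (sel k) (σ k) (σ (k + 1))) →
        ∀ (i : Fin n) (k : ℕ), ∃ m, k ≤ m ∧ sel m = i) := by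
  have hone : (1 : Fin n) ≠ 0 := one_ne_zero_fin hn
  constructor
  · -- some improvement step is always possible
    intro s
    by_cases h0 : s 0 = s (0 - 1)
    · obtain ⟨c, hc⟩ := Fintype.exists_ne_of_one_lt_card (by omega) (s (0 - 1))
      refine ⟨0, Function.update s 0 c,
        fun j hj => Function.update_of_ne hj _ _, ?_⟩
      have hne : (0 : Fin n) - 1 ≠ 0 := by
        intro h
        exact hone (sub_eq_zero.mp h).symm
      unfold ringPayoff
      rw [if_pos rfl, if_pos rfl, if_pos h0,
        Function.update_self, Function.update_of_ne hne,
        if_neg hc]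
      omega
    · have hex : ¬ ∀ i : Fin n, i ≠ 0 → s i = s (i - 1) := by
        intro hall
        apply h0
        have key : ∀ k : ℕ, (hk : k < n) → s ⟨k, hk⟩ = s 0 := by
          intro k
          induction k with
          | zero => intro hk; rfl
          | succ k ih =>
            intro hk
            have hne : (⟨k + 1, hk⟩ : Fin n) ≠ 0 := by
              simp [Fin.ext_iff]
            have hsub : (⟨k + 1, hk⟩ : Fin n) - 1 = ⟨k, by omega⟩ := by
              apply Fin.ext
              simp only [Fin.sub_def, Fin.val_one']
              rw [Nat.mod_eq_of_lt (show 1 < n by omega)]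
              rw [show n - 1 + (k + 1) = k + n by omega, Nat.add_mod_right]
              exact Nat.mod_eq_of_lt (by omega)
            rw [hall _ hne, hsub, ih (by omega)]
        have h1 : (0 : Fin n) - 1 = ⟨n - 1, by omega⟩ := by
          apply Fin.ext
          simp only [Fin.sub_def, Fin.val_one']
          rw [Nat.mod_eq_of_lt (show 1 < n by omega)]
          simp
        rw [h1, key (n - 1) (by omega)]
      push_neg at hex
      obtain ⟨i, hi0, hine⟩ := hex
      refine ⟨i, Function.update s i (s (i - 1)),
        fun j hj => Function.update_of_ne hj _ _, ?_⟩
      have hii : i - 1 ≠ i := by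
        intro h
        exact hone (sub_eq_self.mp h)
      unfold ringPayoff
      rw [if_neg hi0, if_neg hi0, if_neg hine,
        Function.update_self, Function.update_of_ne hii, if_pos rfl]
      omega
  · -- fairness
    intro σ sel hstep i k
    by_contra hcon
    push_neg at hcon
    have h0 : ∀ m, k ≤ m → σ m i = σ k i := fun m hm =>
      not_sel_fix σ sel hstep i k m hm (fun l hl _ => hcon l hl)
    have claim : ∀ t : ℕ, ∃ K, k ≤ K ∧
        ∀ t' : ℕ, t' ≤ t → ∀ m, K ≤ m →
          σ m (i + (t' : Fin n)) = σ K (i + (t' : Fin n)) := by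
      intro t
      induction t with
      | zero =>
        refine ⟨k, le_refl k, ?_⟩
        intro t' ht' m hm
        obtain rfl := Nat.le_zero.mp ht'
        simpa using (h0 m hm).trans (h0 k (le_refl k)).symm
      | succ t ih =>
        obtain ⟨K, hK, hfix⟩ := ih
        have hsub : (i + ((t + 1 : ℕ) : Fin n)) - 1 = i + (t : Fin n) := by
          push_cast
          ring
        obtain ⟨K', hK', hfix'⟩ :=
          fix_succ σ sel hstep (i + ((t + 1 : ℕ) : Fin n)) K
            (by rw [hsub]; exact hfix t (le_refl t))
        refine ⟨K', le_trans hK hK', ?_⟩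
        intro t' ht' m hm
        rcases Nat.lt_or_ge t' (t + 1) with h | h
        · rw [hfix t' (by omega) m (by omega), hfix t' (by omega) K' hK']
        · have : t' = t + 1 := by omega
          subst this
          exact hfix' m hm
    obtain ⟨K, hK, hfix⟩ := claim (n - 1)
    set j := sel K with hj
    have hchange := step_changes σ sel hstep K
    have ht' : ((j - i).val : ℕ) ≤ n - 1 := by
      have := (j - i).isLt
      omega
    have heq : i + (((j - i).val : ℕ) : Fin n) = j := by
      rw [Fin.cast_val_eq_self, add_comm, sub_add_cancel]
    have h1 := hfix (j - i).val ht' (K + 1) (by omega)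
    rw [heq] at h1
    exact hchange h1
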